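/- Let g ∈ ℕ and let D be an acyclic oriented graph whose underlying undirected graph G has odd-girth at least 5, such that for every ordered pair of vertices of D there is at most one directed path from the first to the second. Then: (1) the g-fold iterated line digraph L⃗^g(D) is acyclic and has at most one directed path between every ordered pair of its vertices, so the graph L^g(D) has the AOP property; (2) the odd-girth of L^g(D) is at least 2g+3; and (3) χ(G) ≤ T_g(χ(L^g(D))), where T_0(x) = x and T_{i+1}(x) = 2^{T_i(x)}. -/

import Mathlib

open SimpleGraph

/-- The shift graph `G_{n,2}`: vertices are pairs `(i,j)` with `i < j` in `Fin n`,
and `(i,j)` is adjacent to `(k,l)` iff `j = k` or `l = i`. -/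
def ShiftGraph (n : ℕ) : SimpleGraph {p : Fin n × Fin n // p.1 < p.2} :=
  SimpleGraph.fromRel (fun p q => p.1.2 = q.1.1)

/-- The arcs of a digraph `D`. -/
def Arcs {V : Type} (D : V → V → Prop) : Type := {e : V × V // D e.1 e.2}

/-- The line digraph `L⃗(D)`: there is an arc from `(a,b)` to `(c,d)` iff `b = c`. -/
def LineDigraph {V : Type} (D : V → V → Prop) : Arcs D → Arcs D → Prop :=
  fun e f => e.1.2 = f.1.1

/-- The underlying undirected (simple) graph of a digraph. -/
def UG {V : Type} (D : V → V → Prop) : SimpleGraph V := SimpleGraph.fromRel D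

/-- The undirected line graph `L(D)`: the underlying undirected graph of the line digraph,
in which two arcs are adjacent iff the head of one equals the tail of the other. -/
def LineGraph {V : Type} (D : V → V → Prop) : SimpleGraph (Arcs D) :=
  UG (LineDigraph D)

/-- A digraph is an oriented graph if its arc relation is irreflexive and between any
two vertices at most one of the two opposite arcs is present. -/
def Oriented {V : Type} (D : V → V → Prop) : Prop :=
  Irreflexive D ∧ ∀ a b, D a b → ¬ D b a

/-- A digraph is acyclic if it contains no directed cycle, equivalently no vertex is
reachable from itself by a nonempty directed walk. -/
def DigraphAcyclic {V : Type} (D : V → V → Prop) : Prop :=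
  ∀ v, ¬ Relation.TransGen D v v

/-- The iterated line digraph: `(IterLine V D g).1` is the vertex type of `L⃗^g(D)` and
`(IterLine V D g).2` is its arc relation. -/
def IterLine (V : Type) (D : V → V → Prop) : ℕ → (W : Type) × (W → W → Prop)
  | 0 => ⟨V, D⟩
  | g + 1 => ⟨Arcs (IterLine V D g).2, LineDigraph (IterLine V D g).2⟩

/-- `l` is (the list of vertices of) a directed path from `x` to `y` in the digraph `D`:
consecutive vertices are joined by arcs, the vertices are pairwise distinct, and the
list starts at `x` and ends at `y`. -/
def IsDipath {V : Type} (D : V → V → Prop) (x y : V) (l : List V) : Prop :=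
  l.Chain' D ∧ l.head? = some x ∧ l.getLast? = some y ∧ l.Nodup

/-- A digraph has at most one directed path from any vertex to any other vertex. -/
def UniqueDipaths {V : Type} (D : V → V → Prop) : Prop :=
  ∀ x y l₁ l₂, IsDipath D x y l₁ → IsDipath D x y l₂ → l₁ = l₂

/-- `D` is an orientation of the simple graph `G`. -/
def IsOrientationOf {V : Type} (G : SimpleGraph V) (D : V → V → Prop) : Prop :=
  (∀ a b, D a b → G.Adj a b) ∧ (∀ a b, G.Adj a b → (D a b ∨ D b a)) ∧
    (∀ a b, D a b → ¬ D b a)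

/-- A simple graph has the AOP property if it admits an acyclic orientation with at most
one directed path between any ordered pair of vertices. -/
def HasAOP {V : Type} (G : SimpleGraph V) : Prop :=
  ∃ D : V → V → Prop, IsOrientationOf G D ∧ DigraphAcyclic D ∧ UniqueDipaths D

/-- The tower function: `Tower g x` is `2^(2^(⋯^x))` with `g` twos. -/
def Tower : ℕ → ℕ → ℕ
  | 0, x => x
  | i + 1, x => 2 ^ Tower i x

/-- The graph `G` has degeneracy at most `k`: every nonempty (induced subgraph on a) set
of vertices contains a vertex with at most `k` neighbours inside the set. -/
def DegenLE {V : Type} (G : SimpleGraph V) (k : ℕ) : Prop :=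
  ∀ s : Set V, s.Nonempty → ∃ v ∈ s, ({u ∈ s | G.Adj v u} : Set V).ncard ≤ k

section Aux
variable {V : Type} {D : V → V → Prop}

lemma acyc_ne (h : DigraphAcyclic D) {a b : V} (hab : D a b) : a ≠ b :=
  fun he => h a (Relation.TransGen.single (he ▸ hab))

lemma acyc_asymm (h : DigraphAcyclic D) {a b : V} (hab : D a b) (hba : D b a) : False :=
  h a ((Relation.TransGen.single hab).tail hba)

lemma UG_adj {a b : V} : (UG D).Adj a b ↔ a ≠ b ∧ (D a b ∨ D b a) := by
  simp [UG, SimpleGraph.fromRel_adj]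

lemma UG_adj_of (h : DigraphAcyclic D) {a b : V} (hab : D a b) : (UG D).Adj a b :=
  UG_adj.mpr ⟨acyc_ne h hab, Or.inl hab⟩

lemma line_acyclic (h : DigraphAcyclic D) : DigraphAcyclic (LineDigraph D) := by
  intro e he
  have key : ∀ f g : Arcs D, Relation.TransGen (LineDigraph D) f g →
      Relation.ReflTransGen D f.1.2 g.1.1 := by
    intro f g hfg
    induction hfg with
    | single h1 => exact h1 ▸ Relation.ReflTransGen.refl
    | @tail b c _ h2 ih => exact h2 ▸ (ih.tail b.2)
  exact h e.1.2 (Relation.TransGen.tail' (key e e he) e.2)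

lemma chain'_transGen {l : List V} (hl : l.Chain' D) :
    ∀ i j (hij : i < j) (hj : j < l.length), Relation.TransGen D (l.get ⟨i, Nat.lt_trans hij hj⟩) (l.get ⟨j, hj⟩) := by
  intro i j hij hj
  induction j with
  | zero => omega
  | succ j ih =>
    have hstep : D (l.get ⟨j, by omega⟩) (l.get ⟨j+1, hj⟩) :=
      List.isChain_iff_getElem.mp hl j (by omega)
    rcases Nat.lt_succ_iff_lt_or_eq.mp hij with h | h
    · exact (ih h (by omega)).tail hstep
    · subst h; exact Relation.TransGen.single hstep

lemma chain'_nodup (h : DigraphAcyclic D) {l : List V} (hl : l.Chain' D) : l.Nodup := by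
  rw [List.nodup_iff_injective_get]
  rintro ⟨i, hi⟩ ⟨j, hj⟩ hij
  by_contra hne
  have hne' : i ≠ j := fun he => hne (by simp [he])
  rcases Nat.lt_or_ge i j with hlt | hge
  · have t := chain'_transGen hl i j hlt hj
    rw [hij] at t
    exact h _ t
  · have hlt : j < i := by omega
    have t := chain'_transGen hl j i hlt hi
    rw [hij] at t
    exact h _ t

lemma heads_chain : ∀ {l : List (Arcs D)}, l.Chain' (LineDigraph D) →
    (l.map (fun x => x.1.2)).Chain' D := by
  intro l hl
  induction l with
  | nil => exact List.isChain_nil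
  | cons a t ih =>
    cases t with
    | nil => exact List.isChain_singleton _
    | cons b t' =>
      replace hl := List.isChain_cons_cons.mp hl
      refine List.isChain_cons_cons.mpr ⟨?_, ih hl.2⟩
      have := b.2
      rw [← hl.1] at this
      exact this

lemma line_unique (hac : DigraphAcyclic D) (hu : UniqueDipaths D) :
    UniqueDipaths (LineDigraph D) := by
  intro e f l₁ l₂ h₁ h₂
  obtain ⟨hc₁, hh₁, hl₁, _⟩ := h₁
  obtain ⟨hc₂, hh₂, hl₂, _⟩ := h₂
  have hvert : ∀ (l : List (Arcs D)), l.Chain' (LineDigraph D) → l.head? = some e →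
      l.getLast? = some f → IsDipath D e.1.1 f.1.2 (e.1.1 :: l.map (fun x => x.1.2)) := by
    intro l hc hh hl
    have hchain : (e.1.1 :: l.map (fun x => x.1.2)).Chain' D := by
      refine List.isChain_cons.mpr ⟨?_, heads_chain hc⟩
      intro y hy
      rw [List.head?_map, hh] at hy
      simp only [Option.map_some, Option.mem_def, Option.some.injEq] at hy
      exact hy ▸ e.2
    refine ⟨hchain, rfl, ?_, chain'_nodup hac hchain⟩
    cases l with
    | nil => simp at hh
    | cons b t =>
      have hm := List.getLast?_map (f := fun x : Arcs D => x.1.2) (l := b :: t)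
      rw [hl, List.map_cons] at hm
      rw [List.map_cons, List.getLast?_cons_cons]
      simpa using hm
  have heq := hu e.1.1 f.1.2 _ _ (hvert l₁ hc₁ hh₁ hl₁) (hvert l₂ hc₂ hh₂ hl₂)
  have hmap : l₁.map (fun x => x.1.2) = l₂.map (fun x => x.1.2) := by
    simpa using heq
  have hlen : l₁.length = l₂.length := by
    have := congrArg List.length hmap
    simpa using this
  have hheads : ∀ i (h1 : i < l₁.length) (h2 : i < l₂.length), l₁[i].1.2 = l₂[i].1.2 := by
    intro i h1 h2
    have h0 : (l₁.map (fun x => x.1.2))[i]? = (l₂.map (fun x => x.1.2))[i]? := by rw [hmap]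
    rw [List.getElem?_map, List.getElem?_map, List.getElem?_eq_getElem h1,
      List.getElem?_eq_getElem h2] at h0
    simpa using h0
  have hchainget : ∀ (l : List (Arcs D)), l.Chain' (LineDigraph D) →
      ∀ i (h : i + 1 < l.length), l[i].1.2 = l[i+1].1.1 := by
    intro l hc i h
    exact List.isChain_iff_getElem.mp hc i (by omega)
  have hget0 : ∀ (l : List (Arcs D)), l.head? = some e → ∀ (h : 0 < l.length), l[0] = e := by
    intro l hh h
    rw [List.getElem_zero, ← Option.some_inj, ← List.head?_eq_head]
    exact hh
  refine List.ext_getElem hlen ?_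
  intro i h1 h2
  refine Subtype.ext (Prod.ext ?_ (hheads i h1 h2))
  cases i with
  | zero => rw [hget0 l₁ hh₁ h1, hget0 l₂ hh₂ h2]
  | succ i =>
    have e1 := hchainget l₁ hc₁ i h1
    have e2 := hchainget l₂ hc₂ i h2
    rw [← e1, ← e2]
    exact hheads i (by omega) (by omega)

end Aux

section CWalk
open scoped Classical
variable {V : Type} {G : SimpleGraph V}

lemma succ_mod_lemma {m i : ℕ} (hm : 0 < m) :
    (i + 1) % m = (if i % m + 1 = m then 0 else i % m + 1) := by
  rw [← Nat.mod_add_mod]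
  split
  · next h => rw [h, Nat.mod_self]
  · next h => exact Nat.mod_eq_of_lt (by have := Nat.mod_lt i hm; omega)

lemma periodic_reduce {α : Type*} {f : ℕ → α} {m : ℕ} (hm : 0 < m)
    (hper : ∀ i, f (i + m) = f i) : ∀ i, f i = f (i % m) := by
  intro i
  induction i using Nat.strong_induction_on with
  | _ i ih =>
    by_cases h : i < m
    · rw [Nat.mod_eq_of_lt h]
    · push_neg at h
      calc f i = f ((i - m) + m) := by rw [show (i - m) + m = i by omega]
        _ = f (i - m) := hper _
        _ = f ((i - m) % m) := ih _ (by omega)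
        _ = f (i % m) := by rw [← Nat.mod_eq_sub_mod h]

lemma cwalk_of_closedWalk {x : V} (w : G.Walk x x) (hn : w.length ≠ 0) :
    ∃ u : ℕ → V, (∀ i, u (i + w.length) = u i) ∧ ∀ i, G.Adj (u i) (u (i + 1)) := by
  set n := w.length with hdefn
  have hm : 0 < n := Nat.pos_of_ne_zero hn
  refine ⟨fun i => w.getVert (i % n), fun i => by simp [Nat.add_mod_right], ?_⟩
  intro i
  show G.Adj (w.getVert (i % n)) (w.getVert ((i + 1) % n))
  have hmod : i % n < n := Nat.mod_lt i hm
  rcases Nat.lt_or_ge (i % n + 1) n with h | h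
  · have e1 : (i + 1) % n = i % n + 1 := by rw [succ_mod_lemma hm, if_neg (by omega)]
    rw [e1]
    exact w.adj_getVert_succ (by omega)
  · have he : i % n + 1 = n := by omega
    have e1 : (i + 1) % n = 0 := by rw [succ_mod_lemma hm, if_pos he]
    have hadj := w.adj_getVert_succ (i := i % n) (by omega)
    rw [he] at hadj
    rw [show w.getVert n = x from w.getVert_length] at hadj
    rw [e1, w.getVert_zero]
    exact hadj

lemma lazy_compress (u : ℕ → V)
    (hlazy : ∀ i, u (i + 1) = u i ∨ G.Adj (u i) (u (i + 1))) (k : ℕ) :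
    ∃ w : G.Walk (u 0) (u k),
      w.length = ((Finset.range k).filter (fun i => u i ≠ u (i + 1))).card := by
  classical
  induction k with
  | zero => exact ⟨SimpleGraph.Walk.nil, by simp⟩
  | succ k ih =>
    obtain ⟨w, hw⟩ := ih
    by_cases h : u k = u (k + 1)
    · refine ⟨w.copy rfl h, ?_⟩
      rw [SimpleGraph.Walk.length_copy, hw, Finset.range_add_one, Finset.filter_insert,
        if_neg (by simp [h])]
    · have hadj : G.Adj (u k) (u (k + 1)) := (hlazy k).resolve_left (fun h' => h h'.symm)
      refine ⟨w.concat hadj, ?_⟩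
      rw [SimpleGraph.Walk.length_concat, hw, Finset.range_add_one, Finset.filter_insert,
        if_pos h, Finset.card_insert_of_notMem (by simp)]

lemma changes_even (σ : ℕ → Bool) {m : ℕ} (hper : ∀ i, σ (i + m) = σ i) :
    Even ((Finset.range m).filter (fun i => σ i ≠ σ (i + 1))).card := by
  classical
  set f : ℕ → ZMod 2 := fun i => if σ i then 1 else 0 with hf
  have h1 : ∀ i, (if σ i ≠ σ (i + 1) then (1 : ZMod 2) else 0) = f i + f (i + 1) := by
    intro i
    cases hσ : σ i <;> cases hσ' : σ (i + 1) <;> simp [hf, hσ, hσ'] <;> decide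
  have hcast : (((Finset.range m).filter (fun i => σ i ≠ σ (i + 1))).card : ZMod 2) = 0 := by
    rw [Finset.natCast_card_filter]
    rw [Finset.sum_congr rfl (fun i _ => h1 i), Finset.sum_add_distrib]
    have hshift : ∑ i ∈ Finset.range m, f (i + 1) = ∑ i ∈ Finset.range m, f i := by
      have e1 : ∑ i ∈ Finset.range (m + 1), f i = ∑ i ∈ Finset.range m, f (i + 1) + f 0 :=
        Finset.sum_range_succ' f m
      have e2 : ∑ i ∈ Finset.range (m + 1), f i = ∑ i ∈ Finset.range m, f i + f m :=
        Finset.sum_range_succ f m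
      have e3 : f m = f 0 := by simp [hf, show σ m = σ 0 from by simpa using hper 0]
      rw [e3] at e2
      have := e1.symm.trans e2
      exact add_right_cancel this
    rw [hshift, ← two_mul, show (2 : ZMod 2) = 0 from by decide, zero_mul]
  rw [Nat.even_iff, ← Nat.dvd_iff_mod_eq_zero]
  exact (ZMod.natCast_eq_zero_iff _ 2).mp hcast

lemma transGen_forall_fwd {W : Type} {R : W → W → Prop} (E : ℕ → W)
    (h : ∀ i, R (E i) (E (i + 1))) : ∀ k, Relation.TransGen R (E 0) (E (k + 1)) := by
  intro k
  induction k with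
  | zero => exact Relation.TransGen.single (h 0)
  | succ k ih => exact ih.tail (h (k + 1))

lemma transGen_forall_bwd {W : Type} {R : W → W → Prop} (E : ℕ → W)
    (h : ∀ i, R (E (i + 1)) (E i)) : ∀ k, Relation.TransGen R (E (k + 1)) (E 0) := by
  intro k
  induction k with
  | zero => exact Relation.TransGen.single (h 0)
  | succ k ih => exact Relation.TransGen.head (h (k + 1)) ih

end CWalk

section Steps
open scoped Classical
variable {V : Type} {D : V → V → Prop}

lemma girth_step (hac : DigraphAcyclic D) {b : ℕ}
    (hb : ∀ (m : ℕ) (u : ℕ → V), (∀ i, u (i + m) = u i) →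
      (∀ i, (UG D).Adj (u i) (u (i + 1))) → Odd m → b ≤ m) :
    ∀ (m : ℕ) (E : ℕ → Arcs D), (∀ i, E (i + m) = E i) →
      (∀ i, (UG (LineDigraph D)).Adj (E i) (E (i + 1))) → Odd m → b + 2 ≤ m := by
  intro m E hper hadj hodd
  have hacL := line_acyclic hac
  have hm : 0 < m := by rcases hodd with ⟨j, hj⟩; omega
  have hdir : ∀ i, LineDigraph D (E i) (E (i + 1)) ∨ LineDigraph D (E (i + 1)) (E i) :=
    fun i => (UG_adj.mp (hadj i)).2
  set σ : ℕ → Bool := fun i => decide (LineDigraph D (E i) (E (i + 1))) with hσdef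
  have hσt : ∀ i, σ i = true → LineDigraph D (E i) (E (i + 1)) :=
    fun i h => of_decide_eq_true h
  have hσf : ∀ i, σ i = false → LineDigraph D (E (i + 1)) (E i) := by
    intro i h
    exact (hdir i).resolve_left (of_decide_eq_false h)
  have hEper1 : ∀ i, E (i + m + 1) = E (i + 1) := by
    intro i; rw [show i + m + 1 = (i + 1) + m by ring, hper]
  have hσper : ∀ i, σ (i + m) = σ i := by
    intro i; simp only [hσdef]; rw [hper, hEper1]
  set v : ℕ → V := fun i => if σ i then (E i).1.2 else (E i).1.1 with hvdef
  have hvper : ∀ i, v (i + m) = v i := by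
    intro i; simp only [hvdef]; rw [hper, hσper]
  have hstrict : ∀ i, σ i = σ (i + 1) → (UG D).Adj (v i) (v (i + 1)) := by
    intro i hsame
    have h2 : σ (i + 1) = σ i := hsame.symm
    cases h1 : σ i
    · rw [h1] at h2
      have L1 : (E (i + 1)).1.2 = (E i).1.1 := hσf i h1
      have harc := (E (i + 1)).2
      rw [L1] at harc
      simp only [hvdef, h1, h2, if_neg, Bool.false_eq_true, if_false]
      exact (UG_adj_of hac harc).symm
    · rw [h1] at h2
      have L1 : (E i).1.2 = (E (i + 1)).1.1 := hσt i h1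
      simp only [hvdef, h1, h2, if_true]
      rw [L1]
      exact UG_adj_of hac (E (i + 1)).2
  have hlazystep : ∀ i, σ i ≠ σ (i + 1) → v (i + 1) = v i := by
    intro i hne
    cases h1 : σ i
    · have h2 : σ (i + 1) = true := by
        cases h2 : σ (i + 1)
        · rw [h1, h2] at hne; exact absurd rfl hne
        · rfl
      have L1 : (E (i + 1)).1.2 = (E i).1.1 := hσf i h1
      simp only [hvdef, h1, h2, if_true, Bool.false_eq_true, if_false]
      exact L1
    · have h2 : σ (i + 1) = false := by
        cases h2 : σ (i + 1)
        · rfl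
        · rw [h1, h2] at hne; exact absurd rfl hne
      have L1 : (E i).1.2 = (E (i + 1)).1.1 := hσt i h1
      simp only [hvdef, h1, h2, if_true, Bool.false_eq_true, if_false]
      exact L1.symm
  set C := (Finset.range m).filter (fun i => σ i ≠ σ (i + 1)) with hC
  set S := (Finset.range m).filter (fun i => v i ≠ v (i + 1)) with hS
  have hScard : C.card + S.card = m := by
    have hSeq : S = (Finset.range m).filter (fun i => ¬ (σ i ≠ σ (i + 1))) := by
      apply Finset.filter_congr
      intro i _
      simp only [not_not]
      constructor
      · intro hv
        by_contra hne
        exact hv (hlazystep i hne).symm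
      · intro hsame
        exact (hstrict i hsame).ne
    rw [hSeq, hC]
    have hpart := Finset.card_filter_add_card_filter_not
      (s := Finset.range m) (fun i => σ i ≠ σ (i + 1))
    rwa [Finset.card_range] at hpart
  have hCeven : Even C.card := changes_even σ hσper
  have hCpos : C.card ≠ 0 := by
    intro h0
    have hallm : ∀ i, i < m → σ i = σ (i + 1) := by
      intro i hi
      by_contra hne
      have hmem : i ∈ C := Finset.mem_filter.mpr ⟨Finset.mem_range.mpr hi, hne⟩
      rw [Finset.card_eq_zero] at h0
      rw [h0] at hmem
      exact absurd hmem (Finset.notMem_empty i)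
    have hall : ∀ i, σ i = σ (i + 1) := by
      intro i
      have e1 : σ i = σ (i % m) := periodic_reduce hm hσper i
      have e2 : σ (i + 1) = σ ((i + 1) % m) := periodic_reduce hm hσper (i + 1)
      rcases Nat.lt_or_ge (i % m + 1) m with h | h
      · rw [e1, e2, succ_mod_lemma hm, if_neg (by omega)]
        exact hallm (i % m) (Nat.mod_lt i hm)
      · have he : i % m + 1 = m := by have := Nat.mod_lt i hm; omega
        rw [e1, e2, succ_mod_lemma hm, if_pos he]
        have h3 := hallm (i % m) (Nat.mod_lt i hm)
        rw [he] at h3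
        rw [h3]
        simpa using hσper 0
    have hconst : ∀ i, σ i = σ 0 := by
      intro i
      induction i with
      | zero => rfl
      | succ i ih => rw [← hall i, ih]
    have hEm : E m = E 0 := by simpa using hper 0
    cases h0' : σ 0
    · have hback : ∀ i, LineDigraph D (E (i + 1)) (E i) :=
        fun i => hσf i ((hconst i).trans h0')
      have ht := transGen_forall_bwd E hback (m - 1)
      rw [show m - 1 + 1 = m by omega, hEm] at ht
      exact hacL (E 0) ht
    · have hfwd : ∀ i, LineDigraph D (E i) (E (i + 1)) :=
        fun i => hσt i ((hconst i).trans h0')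
      have ht := transGen_forall_fwd E hfwd (m - 1)
      rw [show m - 1 + 1 = m by omega, hEm] at ht
      exact hacL (E 0) ht
  have hSodd : Odd S.card := by
    rw [Nat.odd_iff] at hodd ⊢
    rw [Nat.even_iff] at hCeven
    omega
  obtain ⟨w, hw⟩ := lazy_compress v (fun i => by
    by_cases hsame : σ i = σ (i + 1)
    · exact Or.inr (hstrict i hsame)
    · exact Or.inl (hlazystep i hsame)) m
  have hclose : v m = v 0 := by simpa using hvper 0
  have hSpos : S.card ≠ 0 := by
    rw [Nat.odd_iff] at hSodd; omega
  obtain ⟨u, h1, h2⟩ := cwalk_of_closedWalk (w.copy rfl hclose)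
    (by rw [SimpleGraph.Walk.length_copy, hw]; exact hSpos)
  have hres := hb _ u h1 h2 (by rw [SimpleGraph.Walk.length_copy, hw]; exact hSodd)
  rw [SimpleGraph.Walk.length_copy, hw] at hres
  rw [Nat.even_iff] at hCeven
  have hbridge : ((Finset.range m).filter (fun i => v i ≠ v (i + 1))).card = S.card := by
    rw [hS]
  omega

lemma base_bound
    (hog : ∀ (v : V) (w : (UG D).Walk v v), w.IsCycle → Odd w.length → 5 ≤ w.length) :
    ∀ (m : ℕ) (u : ℕ → V), (∀ i, u (i + m) = u i) →
      (∀ i, (UG D).Adj (u i) (u (i + 1))) → Odd m → 5 ≤ m := by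
  intro m u hper hadj hodd
  by_contra hlt
  push_neg at hlt
  have hm : 0 < m := by rcases hodd with ⟨j, hj⟩; omega
  rw [Nat.odd_iff] at hodd
  interval_cases m
  · have h1 : u 1 = u 0 := by simpa using hper 0
    have ha : (UG D).Adj (u 0) (u 1) := hadj 0
    rw [h1] at ha
    exact (UG D).loopless.irrefl _ ha
  · simp at hodd
  · have h3 : u 3 = u 0 := by simpa using hper 0
    have h01 : (UG D).Adj (u 0) (u 1) := hadj 0
    have h12 : (UG D).Adj (u 1) (u 2) := hadj 1
    have h23 : (UG D).Adj (u 2) (u 0) := by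
      have := hadj 2
      rwa [show (2:ℕ) + 1 = 3 from rfl, h3] at this
    set w : (UG D).Walk (u 0) (u 0) :=
      SimpleGraph.Walk.cons h01 (SimpleGraph.Walk.cons h12
        (SimpleGraph.Walk.cons h23 SimpleGraph.Walk.nil)) with hw
    have hlen : w.length = 3 := rfl
    have n01 := h01.ne
    have n12 := h12.ne
    have n20 := h23.ne
    have hcyc : w.IsCycle := by
      rw [SimpleGraph.Walk.isCycle_def]
      refine ⟨?_, by simp [hw], ?_⟩
      · rw [SimpleGraph.Walk.isTrail_def]
        simp [hw, Sym2.eq_iff, n01, n12, n20, n01.symm, n12.symm, n20.symm]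
      · simp [hw, n01, n12, n20, n01.symm, n12.symm, n20.symm]
    have := hog (u 0) w hcyc (by rw [hlen]; decide)
    omega
  · simp at hodd

lemma color_step {k : ℕ} (hac : DigraphAcyclic D)
    (h : (UG (LineDigraph D)).Colorable k) : (UG D).Colorable (2 ^ k) := by
  classical
  obtain ⟨C⟩ := h
  let c : V → (Fin k → Bool) := fun v i => decide (∃ w, ∃ hvw : D v w, C ⟨(v, w), hvw⟩ = i)
  have claim : ∀ a b : V, a ≠ b → D a b → c a ≠ c b := by
    intro a b hne hab heq
    have h1 : c a (C ⟨(a, b), hab⟩) = true := by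
      simp only [c, decide_eq_true_eq]
      exact ⟨b, hab, rfl⟩
    rw [heq] at h1
    simp only [c, decide_eq_true_eq] at h1
    obtain ⟨z, hbz, hCz⟩ := h1
    have hadjL : (UG (LineDigraph D)).Adj ⟨(a, b), hab⟩ ⟨(b, z), hbz⟩ := by
      refine UG_adj.mpr ⟨?_, Or.inl rfl⟩
      intro hEq
      apply hne
      have := congrArg (fun e : Arcs D => e.1.1) hEq
      simpa using this
    exact C.valid hadjL hCz.symm
  have col : (UG D).Coloring (Fin k → Bool) := SimpleGraph.Coloring.mk c (by
    intro a b hab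
    rcases UG_adj.mp hab with ⟨hne, hd | hd⟩
    · exact claim a b hne hd
    · exact (claim b a hne.symm hd).symm)
  have hcol := col.colorable
  simpa [Fintype.card_fun] using hcol

lemma tower_shift : ∀ g k, Tower g (2 ^ k) = Tower (g + 1) k := by
  intro g
  induction g with
  | zero => intro k; simp [Tower]
  | succ g ih => intro k; simp only [Tower]; rw [ih]; simp [Tower]

lemma master (D : V → V → Prop) (hacyc : DigraphAcyclic D) (huniq : UniqueDipaths D)
    (hbase : ∀ (m : ℕ) (u : ℕ → V), (∀ i, u (i + m) = u i) →
      (∀ i, (UG D).Adj (u i) (u (i + 1))) → Odd m → 5 ≤ m) (g : ℕ) :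
    DigraphAcyclic (IterLine V D g).2 ∧ UniqueDipaths (IterLine V D g).2 ∧
      (∀ (m : ℕ) (u : ℕ → (IterLine V D g).1), (∀ i, u (i + m) = u i) →
        (∀ i, (UG (IterLine V D g).2).Adj (u i) (u (i + 1))) → Odd m → 2 * g + 3 ≤ m) ∧
      (∀ k : ℕ, (UG (IterLine V D g).2).Colorable k → (UG D).Colorable (Tower g k)) := by
  induction g with
  | zero =>
    refine ⟨hacyc, huniq, ?_, ?_⟩
    · intro m u h1 h2 h3
      have := hbase m u h1 h2 h3
      omega
    · intro k hk
      exact hk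
  | succ g ih =>
    obtain ⟨ha, hu, hgir, hcol⟩ := ih
    refine ⟨line_acyclic ha, line_unique ha hu, ?_, ?_⟩
    · intro m u h1 h2 h3
      have := girth_step ha hgir m u h1 h2 h3
      omega
    · intro k hk
      have h2 := color_step ha hk
      have h3 := hcol _ h2
      rwa [tower_shift] at h3

end Steps

/-- Let `D` be an acyclic oriented graph whose underlying undirected
graph `G` has odd-girth at least `5`, with at most one directed path between any
ordered pair of vertices. Then for every `g`: (1) `L⃗^g(D)` is acyclic and has at most
one directed path between any ordered pair of its vertices, so `L^g(D)` has the AOP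
property; (2) the odd-girth of `L^g(D)` is at least `2g + 3`; and (3)
`χ(G) ≤ T_g(χ(L^g(D)))` where `T_0(x) = x` and `T_{i+1}(x) = 2^{T_i(x)}`. -/
theorem stmt_18 {V : Type} [Fintype V] (D : V → V → Prop) (hor : Oriented D)
    (hacyc : DigraphAcyclic D) (huniq : UniqueDipaths D)
    (hog : ∀ (v : V) (w : (UG D).Walk v v), w.IsCycle → Odd w.length → 5 ≤ w.length)
    (g : ℕ) :
    (DigraphAcyclic (IterLine V D g).2 ∧ UniqueDipaths (IterLine V D g).2 ∧
        HasAOP (UG (IterLine V D g).2)) ∧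
      (∀ (x : (IterLine V D g).1) (w : (UG (IterLine V D g).2).Walk x x),
        w.IsCycle → Odd w.length → 2 * g + 3 ≤ w.length) ∧
      (∀ k : ℕ, (UG (IterLine V D g).2).Colorable k →
        (UG D).Colorable (Tower g k)) := by
  obtain ⟨ha, hu, hgir, hcol⟩ := master D hacyc huniq (base_bound hog) g
  refine ⟨⟨ha, hu, ⟨(IterLine V D g).2, ⟨?_, ?_, ?_⟩, ha, hu⟩⟩, ?_, hcol⟩
  · exact fun a b h => UG_adj_of ha h
  · exact fun a b h => (UG_adj.mp h).2
  · exact fun a b hab hba => acyc_asymm ha hab hba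
  · intro x w hcyc hodd
    obtain ⟨u, h1, h2⟩ := cwalk_of_closedWalk w (by rw [Nat.odd_iff] at hodd; omega)
    exact hgir w.length u h1 h2 hodd
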